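/- Let x : ℝ → ℂ, ω' ∈ ℝ, δ > 0, J, J' positive integers, and define y(t) := x(t) − (1/(2J'))·Σ_{n=−J'}^{J'−1} e^{−iω'nδ}·x(t + nδ). Then Σ_{j=−J}^{J} |y(jδ)|² ≤ 4·Σ_{m=−J−J'}^{J+J'−1} |x(mδ)|². -/

import Mathlib

open Complex

private lemma counting_lemma (f : ℤ → ℝ) (hf : ∀ m, 0 ≤ f m) (J J' : ℤ)
    (hJ' : 0 < J') :
    ∑ j ∈ Finset.Icc (-J) J, ∑ n ∈ Finset.Icc (-J') (J' - 1), f (j + n) ≤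
      (2 * J' : ℝ) * ∑ m ∈ Finset.Icc (-J - J') (J + J' - 1), f m := by
  classical
  set A := Finset.Icc (-J) J
  set B := Finset.Icc (-J') (J' - 1)
  set C := Finset.Icc (-J - J') (J + J' - 1)
  have h1 : ∑ j ∈ A, ∑ n ∈ B, f (j + n) =
      ∑ p ∈ A ×ˢ B, f (p.1 + p.2) := by
    rw [Finset.sum_product]
  have e : ℤ × ℤ → ℤ × ℤ := fun p => (p.1 + p.2, p.2)
  have h2 : ∑ p ∈ A ×ˢ B, f (p.1 + p.2) =
      ∑ q ∈ (A ×ˢ B).image (fun p => (p.1 + p.2, p.2)), f q.1 := by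
    rw [Finset.sum_image]
    intro p hp q hq h
    simp only [Prod.mk.injEq] at h
    obtain ⟨h1', h2'⟩ := h
    exact Prod.ext (by omega) h2'
  have h3 : (A ×ˢ B).image (fun p => (p.1 + p.2, p.2)) ⊆ C ×ˢ B := by
    intro q hq
    simp only [Finset.mem_image, Finset.mem_product, A, B, C, Finset.mem_Icc] at hq ⊢
    obtain ⟨p, ⟨hp1, hp2⟩, rfl⟩ := hq
    omega
  have h4 : ∑ q ∈ (A ×ˢ B).image (fun p => (p.1 + p.2, p.2)), f q.1 ≤
      ∑ q ∈ C ×ˢ B, f q.1 :=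
    Finset.sum_le_sum_of_subset_of_nonneg h3 (fun q _ _ => hf q.1)
  have h5 : ∑ q ∈ C ×ˢ B, f q.1 = (2 * J' : ℝ) * ∑ m ∈ C, f m := by
    rw [Finset.sum_product]
    have hcard : (B.card : ℝ) = 2 * J' := by
      simp only [B, Int.card_Icc]
      have h0 : (J' - 1 + 1 - -J') = 2 * J' := by ring
      rw [h0, ← Int.cast_natCast (R := ℝ), Int.toNat_of_nonneg (by omega : (0:ℤ) ≤ 2 * J')]
      push_cast
      ring
    rw [Finset.sum_comm]
    simp only [Finset.sum_const, nsmul_eq_mul]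
    rw [hcard]
  calc ∑ j ∈ A, ∑ n ∈ B, f (j + n) = ∑ q ∈ (A ×ˢ B).image (fun p => (p.1 + p.2, p.2)), f q.1 := by
        rw [h1, h2]
    _ ≤ ∑ q ∈ C ×ˢ B, f q.1 := h4
    _ = (2 * J' : ℝ) * ∑ m ∈ C, f m := h5

/-- Averaging-filter estimate: the filtered samples are controlled by the samples of
`x` on a larger discrete window. -/
theorem filtered_samples_estimate (x : ℝ → ℂ) (ω' δ : ℝ) (hδ : 0 < δ)
    (J J' : ℕ) (hJ : 0 < J) (hJ' : 0 < J')
    (y : ℝ → ℂ)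
    (hy : ∀ t : ℝ, y t = x t - (1 / (2 * (J' : ℂ))) *
      ∑ n ∈ Finset.Icc (-(J' : ℤ)) ((J' : ℤ) - 1),
        Complex.exp (-Complex.I * (ω' * (n : ℝ) * δ)) * x (t + (n : ℝ) * δ)) :
    ∑ j ∈ Finset.Icc (-(J : ℤ)) (J : ℤ), ‖y ((j : ℝ) * δ)‖ ^ 2 ≤
      4 * ∑ m ∈ Finset.Icc (-(J : ℤ) - (J' : ℤ)) ((J : ℤ) + (J' : ℤ) - 1),
        ‖x ((m : ℝ) * δ)‖ ^ 2 := by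
  classical
  set f : ℤ → ℝ := fun m => ‖x ((m : ℝ) * δ)‖ ^ 2 with hf_def
  have hf : ∀ m, 0 ≤ f m := fun m => sq_nonneg _
  set B := Finset.Icc (-(J' : ℤ)) ((J' : ℤ) - 1)
  set C := Finset.Icc (-(J : ℤ) - (J' : ℤ)) ((J : ℤ) + (J' : ℤ) - 1)
  have hBcard : (B.card : ℝ) = 2 * (J' : ℝ) := by
    simp only [B, Int.card_Icc]
    have h0 : ((J' : ℤ) - 1 + 1 - -(J' : ℤ)) = 2 * J' := by ring
    rw [h0, ← Int.cast_natCast (R := ℝ), Int.toNat_of_nonneg (by positivity : (0:ℤ) ≤ 2 * (J' : ℤ))]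
    push_cast
    ring
  have hJ'pos : (0 : ℝ) < (J' : ℝ) := by exact_mod_cast hJ'
  -- pointwise estimate
  have key : ∀ j : ℤ, ‖y ((j : ℝ) * δ)‖ ^ 2 ≤
      2 * f j + (1 / (J' : ℝ)) * ∑ n ∈ B, f (j + n) := by
    intro j
    set t := (j : ℝ) * δ
    set S := ∑ n ∈ B, Complex.exp (-Complex.I * (ω' * (n : ℝ) * δ)) * x (t + (n : ℝ) * δ)
    have hyt : y t = x t - (1 / (2 * (J' : ℂ))) * S := hy t
    have hnormS : ‖S‖ ≤ ∑ n ∈ B, ‖x (t + (n : ℝ) * δ)‖ := by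
      refine le_trans (norm_sum_le _ _) (Finset.sum_le_sum fun n _ => ?_)
      rw [norm_mul]
      have : ‖Complex.exp (-Complex.I * (ω' * (n : ℝ) * δ))‖ = 1 := by
        rw [Complex.norm_exp]
        simp [Complex.exp_re, Complex.mul_re]
      rw [this, one_mul]
    have hCS : (∑ n ∈ B, ‖x (t + (n : ℝ) * δ)‖) ^ 2 ≤
        (B.card : ℝ) * ∑ n ∈ B, ‖x (t + (n : ℝ) * δ)‖ ^ 2 :=
      sq_sum_le_card_mul_sum_sq
    have hsum_eq : ∑ n ∈ B, ‖x (t + (n : ℝ) * δ)‖ ^ 2 = ∑ n ∈ B, f (j + n) := by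
      refine Finset.sum_congr rfl fun n _ => ?_
      have : t + (n : ℝ) * δ = ((j + n : ℤ) : ℝ) * δ := by
        push_cast [t]; ring
      rw [this]
    have hcoef : ‖(1 / (2 * (J' : ℂ)))‖ = 1 / (2 * (J' : ℝ)) := by
      rw [norm_div, norm_one, norm_mul]
      simp [Complex.norm_natCast]
    have hS2 : ‖(1 / (2 * (J' : ℂ))) * S‖ ^ 2 ≤
        (1 / (2 * (J' : ℝ))) * ∑ n ∈ B, f (j + n) := by
      rw [norm_mul, mul_pow, hcoef]
      have h1 : ‖S‖ ^ 2 ≤ (B.card : ℝ) * ∑ n ∈ B, f (j + n) := by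
        rw [← hsum_eq]
        exact le_trans (by nlinarith [norm_nonneg S]) hCS
      calc (1 / (2 * (J':ℝ))) ^ 2 * ‖S‖ ^ 2
          ≤ (1 / (2 * (J':ℝ))) ^ 2 * ((B.card : ℝ) * ∑ n ∈ B, f (j + n)) := by
            apply mul_le_mul_of_nonneg_left h1 (by positivity)
        _ = (1 / (2 * (J':ℝ))) * ∑ n ∈ B, f (j + n) := by
            rw [hBcard]; field_simp
    have htri : ‖y t‖ ≤ ‖x t‖ + ‖(1 / (2 * (J' : ℂ))) * S‖ := by
      rw [hyt]; exact norm_sub_le _ _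
    have hxt : ‖x t‖ ^ 2 = f j := rfl
    have h2 : ‖y t‖ ^ 2 ≤ 2 * ‖x t‖ ^ 2 + 2 * ‖(1 / (2 * (J' : ℂ))) * S‖ ^ 2 := by
      nlinarith [htri, norm_nonneg (y t), norm_nonneg (x t),
        norm_nonneg ((1 / (2 * (J' : ℂ))) * S),
        sq_nonneg (‖x t‖ - ‖(1 / (2 * (J' : ℂ))) * S‖)]
    calc ‖y t‖ ^ 2 ≤ 2 * ‖x t‖ ^ 2 + 2 * ‖(1 / (2 * (J' : ℂ))) * S‖ ^ 2 := h2
      _ ≤ 2 * f j + 2 * ((1 / (2 * (J':ℝ))) * ∑ n ∈ B, f (j + n)) := by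
          rw [hxt]
          exact add_le_add le_rfl (mul_le_mul_of_nonneg_left hS2 (by norm_num))
      _ = 2 * f j + (1 / (J' : ℝ)) * ∑ n ∈ B, f (j + n) := by
          field_simp
  -- sum the pointwise estimate
  have hsum : ∑ j ∈ Finset.Icc (-(J : ℤ)) (J : ℤ), ‖y ((j : ℝ) * δ)‖ ^ 2 ≤
      ∑ j ∈ Finset.Icc (-(J : ℤ)) (J : ℤ),
        (2 * f j + (1 / (J' : ℝ)) * ∑ n ∈ B, f (j + n)) :=
    Finset.sum_le_sum fun j _ => key j
  rw [Finset.sum_add_distrib] at hsum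
  have hsub : Finset.Icc (-(J : ℤ)) (J : ℤ) ⊆ C := by
    intro m hm
    simp only [Finset.mem_Icc, C] at hm ⊢
    omega
  have hA : ∑ j ∈ Finset.Icc (-(J : ℤ)) (J : ℤ), 2 * f j ≤ 2 * ∑ m ∈ C, f m := by
    rw [← Finset.mul_sum]
    exact mul_le_mul_of_nonneg_left
      (Finset.sum_le_sum_of_subset_of_nonneg hsub fun m _ _ => hf m) (by norm_num)
  have hcount := counting_lemma f hf (J : ℤ) (J' : ℤ) (by exact_mod_cast hJ')
  have hB2 : ∑ j ∈ Finset.Icc (-(J : ℤ)) (J : ℤ),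
      (1 / (J' : ℝ)) * ∑ n ∈ B, f (j + n) ≤ 2 * ∑ m ∈ C, f m := by
    rw [← Finset.mul_sum]
    have : (1 / (J' : ℝ)) * ((2 * (J' : ℝ)) * ∑ m ∈ C, f m) = 2 * ∑ m ∈ C, f m := by
      field_simp
    calc (1 / (J' : ℝ)) * ∑ j ∈ Finset.Icc (-(J : ℤ)) (J : ℤ), ∑ n ∈ B, f (j + n)
        ≤ (1 / (J' : ℝ)) * ((2 * (J' : ℝ)) * ∑ m ∈ C, f m) := by
          apply mul_le_mul_of_nonneg_left _ (by positivity)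
          simpa using hcount
      _ = 2 * ∑ m ∈ C, f m := this
  calc ∑ j ∈ Finset.Icc (-(J : ℤ)) (J : ℤ), ‖y ((j : ℝ) * δ)‖ ^ 2
      ≤ (∑ j ∈ Finset.Icc (-(J : ℤ)) (J : ℤ), 2 * f j) +
        ∑ j ∈ Finset.Icc (-(J : ℤ)) (J : ℤ), (1 / (J' : ℝ)) * ∑ n ∈ B, f (j + n) := hsum
    _ ≤ 2 * ∑ m ∈ C, f m + 2 * ∑ m ∈ C, f m := add_le_add hA hB2
    _ = 4 * ∑ m ∈ C, f m := by ring
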